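/- Let a₂, b₂, c₂, a₁, b₁, c₁, s be complex with r₋ a root of c₂r² + (b₂-s)r + a₂ = 0 and r₊ a root of c₁r² + (b₁-s)r + a₁ = 0, both roots nonzero, c₂r₋ + b₂ - s ≠ 0 and a₁r₊⁻¹ + b₁ - s ≠ 0. If B^{k+1} = -c₁ r₋ A^k / (a₁ r₊⁻² + (b₁-s) r₊⁻¹) and A^{k+1} = -a₂ r₊⁻¹ B^k / (c₂ r₋² + (b₂-s) r₋), then A^{k+2} = ρ A^k and B^{k+2} = ρ B^k with ρ = (a₂c₁)/((c₂r₋ + b₂ - s)(a₁r₊⁻¹ + b₁ - s)) = r₋/r₊. -/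

import Mathlib

/-- The amplitude recursions of the Dirichlet Schwarz waveform relaxation
compose into the contraction relation `A^{k+2} = ρ A^k`, `B^{k+2} = ρ B^k` with
`ρ = r₋/r₊`. -/
theorem stmt_18 (a₁ b₁ c₁ a₂ b₂ c₂ s rm rp : ℂ)
    (hrm : c₂ * rm ^ 2 + (b₂ - s) * rm + a₂ = 0)
    (hrp : c₁ * rp ^ 2 + (b₁ - s) * rp + a₁ = 0)
    (hrm0 : rm ≠ 0) (hrp0 : rp ≠ 0)
    (hd1 : c₂ * rm + b₂ - s ≠ 0) (hd2 : a₁ * rp⁻¹ + b₁ - s ≠ 0)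
    (A B : ℕ → ℂ)
    (hB : ∀ k, B (k + 1) =
      -(c₁ * rm) * A k / (a₁ * rp⁻¹ ^ 2 + (b₁ - s) * rp⁻¹))
    (hA : ∀ k, A (k + 1) =
      -(a₂ * rp⁻¹) * B k / (c₂ * rm ^ 2 + (b₂ - s) * rm)) :
    (∀ k, A (k + 2) =
        (a₂ * c₁) / ((c₂ * rm + b₂ - s) * (a₁ * rp⁻¹ + b₁ - s)) * A k ∧
      B (k + 2) =
        (a₂ * c₁) / ((c₂ * rm + b₂ - s) * (a₁ * rp⁻¹ + b₁ - s)) * B k) ∧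
    (a₂ * c₁) / ((c₂ * rm + b₂ - s) * (a₁ * rp⁻¹ + b₁ - s)) = rm / rp := by
  have key1 : c₂ * rm + b₂ - s = -a₂ * rm⁻¹ := by
    field_simp
    linear_combination hrm
  have key2 : a₁ * rp⁻¹ + b₁ - s = -c₁ * rp := by
    field_simp
    linear_combination hrp
  have ha2 : a₂ ≠ 0 := by
    intro h; apply hd1; rw [key1, h]; ring
  have hc1 : c₁ ≠ 0 := by
    intro h; apply hd2; rw [key2, h]; ring
  have hden1 : c₂ * rm ^ 2 + (b₂ - s) * rm = -a₂ := by linear_combination hrm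
  have hden2 : a₁ * rp⁻¹ ^ 2 + (b₁ - s) * rp⁻¹ = -c₁ := by
    field_simp
    linear_combination hrp
  have hrho : (a₂ * c₁) / ((c₂ * rm + b₂ - s) * (a₁ * rp⁻¹ + b₁ - s)) = rm / rp := by
    rw [key1, key2]
    field_simp
  refine ⟨fun k => ?_, hrho⟩
  have hAk : A (k + 2) = rm / rp * A k := by
    rw [show k + 2 = (k + 1) + 1 from rfl, hA, hB, hden1, hden2]
    field_simp
  have hBk : B (k + 2) = rm / rp * B k := by
    rw [show k + 2 = (k + 1) + 1 from rfl, hB, hA, hden1, hden2]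
    field_simp
  rw [hrho]
  exact ⟨hAk, hBk⟩
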